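/- Fix integers n ≥ k ≥ 2 and reals 0 < p ≤ q ≤ 1/2 with p·C(n,k) ≥ 4√n. Let G ~ H^{(k)}(n,p) and H ~ H^{(k)}(n,q) be independent, and set ε = 4·n^{1/4}·√(p q·C(n,k)). Then with probability at least 1 − 4e^{−√n}, one has |disc(G,H) − discP(G,H)| ≤ 2ε. -/

import Mathlib

open MeasureTheory Finset Filter

/-- Bernoulli measure on `Bool` with success probability `p`. -/
noncomputable def bern (p : ℝ) : Measure Bool :=
  ENNReal.ofReal p • Measure.dirac true + ENNReal.ofReal (1 - p) • Measure.dirac false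

/-- Product Bernoulli measure on subsets of `Finset (Fin n)` (indicator functions),
modelling the random hypergraph `H^{(k)}(n, p)`. -/
noncomputable def hypMeasure (n : ℕ) (p : ℝ) : Measure (Finset (Fin n) → Bool) :=
  Measure.pi fun _ => bern p

/-- The edge set of the `k`-uniform hypergraph determined by the outcome `ω`. -/
def edgesOf (n k : ℕ) (ω : Finset (Fin n) → Bool) : Finset (Finset (Fin n)) :=
  Finset.univ.filter fun s => s.card = k ∧ ω s = true

/-- `e(G_π ∩ H)`, the number of common edges of `G` permuted by `π` and `H`. -/
def overlap (n : ℕ) (G H : Finset (Finset (Fin n))) (π : Equiv.Perm (Fin n)) : ℕ :=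
  ((G.image fun e => e.image π) ∩ H).card

/-- The relative discrepancy `disc(G, H)`. -/
noncomputable def disc (n k : ℕ) (G H : Finset (Finset (Fin n))) : ℝ :=
  Finset.univ.sup' Finset.univ_nonempty fun π : Equiv.Perm (Fin n) =>
    |(overlap n G H π : ℝ) -
      ((G.card : ℝ) / (n.choose k)) * ((H.card : ℝ) / (n.choose k)) * (n.choose k)|

/-- The probabilistic discrepancy `discP(G, H)`. -/
noncomputable def discP (n k : ℕ) (p q : ℝ) (G H : Finset (Finset (Fin n))) : ℝ :=
  Finset.univ.sup' Finset.univ_nonempty fun π : Equiv.Perm (Fin n) =>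
    |(overlap n G H π : ℝ) - p * q * (n.choose k)|

/-- `N = C(n - ⌊n/k⌋, k - 1)`. -/
def Nk (k n : ℕ) : ℕ := (n - n / k).choose (k - 1)

open ProbabilityTheory

lemma bern_prob {p : ℝ} (h0 : 0 ≤ p) (h1 : p ≤ 1) : IsProbabilityMeasure (bern p) := by
  constructor
  simp [bern, ← ENNReal.ofReal_add h0 (by linarith : (0:ℝ) ≤ 1 - p)]

lemma bern_true (p : ℝ) : bern p {true} = ENNReal.ofReal p := by
  simp [bern, Measure.dirac_apply]

lemma bern_false (p : ℝ) : bern p {false} = ENNReal.ofReal (1 - p) := by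
  simp [bern, Measure.dirac_apply]

lemma integral_bern {p : ℝ} (h0 : 0 ≤ p) (h1 : p ≤ 1) (f : Bool → ℝ) :
    ∫ b, f b ∂(bern p) = p * f true + (1 - p) * f false := by
  haveI : IsProbabilityMeasure (bern p) := bern_prob h0 h1
  rw [integral_fintype (Integrable.of_finite)]
  simp [Measure.real, bern_true, bern_false, ENNReal.toReal_ofReal h0,
    ENNReal.toReal_ofReal (by linarith : (0:ℝ) ≤ 1 - p)]

lemma hyp_prob (n : ℕ) {p : ℝ} (h0 : 0 ≤ p) (h1 : p ≤ 1) :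
    IsProbabilityMeasure (hypMeasure n p) := by
  haveI := bern_prob h0 h1
  unfold hypMeasure
  infer_instance

lemma card_ksets (n k : ℕ) :
    (Finset.univ.filter fun s : Finset (Fin n) => s.card = k).card = n.choose k := by
  rw [show (Finset.univ : Finset (Finset (Fin n))) = Finset.univ.powerset from
    Finset.powerset_univ.symm, ← Finset.powersetCard_eq_filter]
  simp

lemma mgf_edges (n k : ℕ) {p : ℝ} (h0 : 0 ≤ p) (h1 : p ≤ 1) (t : ℝ) :
    mgf (fun ω => ((edgesOf n k ω).card : ℝ)) (hypMeasure n p) t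
      = (p * Real.exp t + (1 - p)) ^ (n.choose k) := by
  letI : MeasureSpace Bool := ⟨bern p⟩
  haveI : IsProbabilityMeasure (volume : Measure Bool) := bern_prob h0 h1
  have hrw : ∀ ω : Finset (Fin n) → Bool,
      Real.exp (t * ((edgesOf n k ω).card : ℝ))
        = ∏ s : Finset (Fin n),
            (fun b : Bool => if s.card = k ∧ b = true then Real.exp t else 1) (ω s) := by
    intro ω
    rw [edgesOf, Finset.card_filter]
    push_cast
    rw [Finset.mul_sum, Real.exp_sum]
    refine Finset.prod_congr rfl fun s _ => ?_
    by_cases h : s.card = k ∧ ω s = true <;> simp [h]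
  rw [mgf]
  calc ∫ ω, Real.exp (t * ((edgesOf n k ω).card : ℝ)) ∂(hypMeasure n p)
      = ∫ x : Finset (Fin n) → Bool,
          ∏ s : Finset (Fin n),
            (fun b : Bool => if s.card = k ∧ b = true then Real.exp t else 1) (x s) := by
        simp_rw [hrw]; rfl
    _ = ∏ s : Finset (Fin n),
          ∫ b, (if s.card = k ∧ b = true then Real.exp t else 1) ∂(bern p) :=
        MeasureTheory.integral_fintype_prod_eq_prod
          (fun (s : Finset (Fin n)) (b : Bool) => if s.card = k ∧ b = true then Real.exp t else 1)
    _ = ∏ s : Finset (Fin n), (if s.card = k then p * Real.exp t + (1 - p) else 1) := by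
        refine Finset.prod_congr rfl fun s _ => ?_
        rw [integral_bern h0 h1]
        by_cases h : s.card = k <;> simp [h]
    _ = (p * Real.exp t + (1 - p)) ^ (n.choose k) := by
        rw [Finset.prod_ite, Finset.prod_const, Finset.prod_const_one, mul_one, card_ksets]

lemma exp_le_quad {x : ℝ} (h0 : 0 ≤ x) (h1 : x ≤ 1/2) : Real.exp x ≤ 1 + x + 2*x^2 := by
  have h2 : (0:ℝ) < 1 - x := by linarith
  have h3 : 1 - x ≤ Real.exp (-x) := by have := Real.add_one_le_exp (-x); linarith
  have h4 : Real.exp x ≤ 1 / (1 - x) := by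
    rw [le_div_iff₀ h2]
    calc Real.exp x * (1 - x) ≤ Real.exp x * Real.exp (-x) :=
          mul_le_mul_of_nonneg_left h3 (Real.exp_pos x).le
      _ = 1 := by rw [← Real.exp_add]; simp
  refine h4.trans ?_
  rw [div_le_iff₀ h2]; nlinarith

lemma exp_neg_le_quad {x : ℝ} (h0 : 0 ≤ x) : Real.exp (-x) ≤ 1 - x + x^2/2 := by
  have key : MonotoneOn (fun y : ℝ => 1 - y + y^2/2 - Real.exp (-y)) (Set.Ici 0) := by
    have hd : ∀ y : ℝ, HasDerivAt (fun y : ℝ => 1 - y + y^2/2 - Real.exp (-y))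
        (-1 + y + Real.exp (-y)) y := by
      intro y
      have h1 : HasDerivAt (fun y : ℝ => 1 - y) (-1) y := by
        simpa using (hasDerivAt_id y).const_sub 1
      have h2 : HasDerivAt (fun y : ℝ => y^2/2) y y := by
        have := (hasDerivAt_pow 2 y).div_const 2
        norm_num at this
        simpa using this
      have h3 : HasDerivAt (fun y : ℝ => Real.exp (-y)) (-Real.exp (-y)) y := by
        have := (Real.hasDerivAt_exp (-y)).comp y (hasDerivAt_neg y)
        simpa [Function.comp_def] using this
      have := (h1.add h2).sub h3
      exact this.congr_deriv (by ring)
    apply monotoneOn_of_deriv_nonneg (convex_Ici 0)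
    · exact Continuous.continuousOn (by continuity)
    · intro y _
      exact (hd y).differentiableAt.differentiableWithinAt
    · intro y hy
      rw [(hd y).deriv]
      rw [interior_Ici] at hy
      have hy0 : 0 < y := hy
      have := Real.add_one_le_exp (-y)
      linarith
  have h := key Set.self_mem_Ici (Set.mem_Ici.mpr h0) h0
  simp only [Real.exp_zero] at h
  norm_num at h
  linarith

lemma rpow_quarter_sq (n : ℕ) : ((n:ℝ)^((1:ℝ)/4))^2 = Real.sqrt n := by
  rw [← Real.rpow_natCast ((n:ℝ)^((1:ℝ)/4)) 2, ← Real.rpow_mul (Nat.cast_nonneg n),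
    Real.sqrt_eq_rpow]
  norm_num

lemma tail_bound (n k : ℕ) {p : ℝ} (hp : 0 < p) (h1 : p ≤ 1) (hn : 1 ≤ n)
    (hpC : 4 * Real.sqrt n ≤ p * (n.choose k)) :
    hypMeasure n p {ω | Real.sqrt 8 * (n:ℝ)^((1:ℝ)/4) * Real.sqrt (p * (n.choose k))
        < |((edgesOf n k ω).card : ℝ) - p * (n.choose k)|}
      ≤ ENNReal.ofReal (2 * Real.exp (-Real.sqrt n)) := by
  haveI : IsProbabilityMeasure (hypMeasure n p) := hyp_prob n hp.le h1
  set μ := hypMeasure n p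
  set C : ℝ := ((n.choose k : ℕ) : ℝ) with hCdef
  set X : (Finset (Fin n) → Bool) → ℝ := fun ω => ((edgesOf n k ω).card : ℝ) with hXdef
  set m : ℝ := (n:ℝ)^((1:ℝ)/4) with hmdef
  set u : ℝ := Real.sqrt 8 * m * Real.sqrt (p * C) with hudef
  have hsn : 1 ≤ Real.sqrt n := by
    have h : (1:ℝ) ≤ (n:ℝ) := by exact_mod_cast hn
    nlinarith [Real.sq_sqrt (by positivity : (0:ℝ) ≤ (n:ℝ)), Real.sqrt_nonneg (n:ℝ)]
  have hpC0 : 0 < p * C := lt_of_lt_of_le (by linarith) hpC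
  have hm0 : 0 ≤ m := Real.rpow_nonneg (Nat.cast_nonneg n) _
  have hm2 : m^2 = Real.sqrt n := rpow_quarter_sq n
  have hu0 : 0 ≤ u := by positivity
  have hu2 : u^2 = 8 * Real.sqrt n * (p*C) := by
    rw [hudef, mul_pow, mul_pow, Real.sq_sqrt (by norm_num : (0:ℝ) ≤ 8),
      Real.sq_sqrt hpC0.le, hm2]
  have hu2pC : u ≤ 2*(p*C) := by nlinarith [hpC, Real.sqrt_nonneg (n:ℝ)]
  have hsplit : {ω | u < |X ω - p*C|} ⊆ {ω | p*C + u ≤ X ω} ∪ {ω | X ω ≤ p*C - u} := by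
    intro ω hω
    simp only [Set.mem_setOf_eq] at hω
    rcases lt_abs.mp hω with h | h
    · left; simp only [Set.mem_setOf_eq]; linarith
    · right; simp only [Set.mem_setOf_eq]; linarith
  have hA : μ {ω | p*C + u ≤ X ω} ≤ ENNReal.ofReal (Real.exp (-Real.sqrt n)) := by
    set t : ℝ := u / (4*(p*C)) with htdef
    have ht0 : 0 ≤ t := by positivity
    have ht12 : t ≤ 1/2 := by
      rw [htdef, div_le_iff₀ (by positivity)]; linarith
    have hb := measure_ge_le_exp_mul_mgf (X := X) (μ := μ) (p*C + u) ht0 Integrable.of_finite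
    rw [show mgf X μ t = (p * Real.exp t + (1 - p)) ^ (n.choose k) from
      mgf_edges n k hp.le h1 t] at hb
    have step1 : p * Real.exp t + (1 - p) ≤ Real.exp (p*(t + 2*t^2)) := by
      have h := exp_le_quad ht0 ht12
      have h2 := Real.add_one_le_exp (p*(t+2*t^2))
      nlinarith
    have step2 : (p * Real.exp t + (1 - p)) ^ (n.choose k) ≤ Real.exp (p * C * (t + 2*t^2)) := by
      calc (p * Real.exp t + (1-p))^(n.choose k)
          ≤ (Real.exp (p*(t+2*t^2)))^(n.choose k) := by
            apply pow_le_pow_left₀ (add_nonneg (mul_nonneg hp.le (Real.exp_pos t).le) (by linarith)) step1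
        _ = Real.exp (p * C * (t+2*t^2)) := by
            rw [← Real.exp_nat_mul]; congr 1; rw [hCdef]; ring
    have hne : (p*C) ≠ 0 := hpC0.ne'
    have e1 : t * u = u^2/(4*(p*C)) := by rw [htdef]; field_simp
    have e2 : p*C*t^2 = u^2/(16*(p*C)) := by rw [htdef]; field_simp; ring
    have harith : -t * (p*C+u) + p*C*(t+2*t^2) = -Real.sqrt n := by
      have hr : -t * (p*C+u) + p*C*(t+2*t^2) = -(t*u) + 2*(p*C*t^2) := by ring
      rw [hr, e1, e2, hu2]
      have := right_ne_zero_of_mul hne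
      field_simp
      ring
    have final : Real.exp (-t * (p*C+u)) * (p*Real.exp t + (1-p))^(n.choose k)
        ≤ Real.exp (-Real.sqrt n) := by
      calc Real.exp (-t * (p*C+u)) * (p*Real.exp t + (1-p))^(n.choose k)
          ≤ Real.exp (-t*(p*C+u)) * Real.exp (p*C*(t+2*t^2)) :=
            mul_le_mul_of_nonneg_left step2 (Real.exp_pos _).le
        _ = Real.exp (-t*(p*C+u) + p*C*(t+2*t^2)) := (Real.exp_add _ _).symm
        _ = Real.exp (-Real.sqrt n) := by rw [harith]
    calc μ {ω | p*C + u ≤ X ω} = ENNReal.ofReal ((μ {ω | p*C + u ≤ X ω}).toReal) :=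
          (ENNReal.ofReal_toReal (measure_ne_top _ _)).symm
      _ ≤ ENNReal.ofReal (Real.exp (-Real.sqrt n)) :=
          ENNReal.ofReal_le_ofReal (hb.trans final)
  have hB : μ {ω | X ω ≤ p*C - u} ≤ ENNReal.ofReal (Real.exp (-Real.sqrt n)) := by
    set t : ℝ := u / (p*C) with htdef
    have ht0 : 0 ≤ t := by positivity
    have hb := measure_le_le_exp_mul_mgf (X := X) (μ := μ) (t := -t) (p*C - u)
      (by linarith) Integrable.of_finite
    rw [show mgf X μ (-t) = (p * Real.exp (-t) + (1 - p)) ^ (n.choose k) from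
      mgf_edges n k hp.le h1 (-t)] at hb
    have step1 : p * Real.exp (-t) + (1 - p) ≤ Real.exp (p*(-t + t^2/2)) := by
      have h := exp_neg_le_quad ht0
      have h2 := Real.add_one_le_exp (p*(-t+t^2/2))
      nlinarith
    have step2 : (p * Real.exp (-t) + (1 - p)) ^ (n.choose k)
        ≤ Real.exp (p * C * (-t + t^2/2)) := by
      calc (p * Real.exp (-t) + (1-p))^(n.choose k)
          ≤ (Real.exp (p*(-t+t^2/2)))^(n.choose k) := by
            apply pow_le_pow_left₀ (add_nonneg (mul_nonneg hp.le (Real.exp_pos (-t)).le) (by linarith)) step1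
        _ = Real.exp (p * C * (-t+t^2/2)) := by
            rw [← Real.exp_nat_mul]; congr 1; rw [hCdef]; ring
    have hne : (p*C) ≠ 0 := hpC0.ne'
    have e1 : t * u = u^2/(p*C) := by rw [htdef]; field_simp
    have e2 : p*C*t^2 = u^2/(p*C) := by rw [htdef]; field_simp
    have harith : -(-t) * (p*C-u) + p*C*(-t+t^2/2) = -(u^2)/(2*(p*C)) := by
      have hr : -(-t) * (p*C-u) + p*C*(-t+t^2/2) = -(t*u) + (p*C*t^2)/2 := by ring
      rw [hr, e1, e2]
      field_simp
      ring
    have harith2 : -(u^2)/(2*(p*C)) ≤ -Real.sqrt n := by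
      have hq : u^2/(2*(p*C)) = 4 * Real.sqrt n := by
        have := right_ne_zero_of_mul hne
        rw [hu2]; field_simp; ring
      rw [neg_div, hq]
      linarith
    have final : Real.exp (-(-t) * (p*C-u)) * (p*Real.exp (-t) + (1-p))^(n.choose k)
        ≤ Real.exp (-Real.sqrt n) := by
      calc Real.exp (-(-t) * (p*C-u)) * (p*Real.exp (-t) + (1-p))^(n.choose k)
          ≤ Real.exp (-(-t)*(p*C-u)) * Real.exp (p*C*(-t+t^2/2)) :=
            mul_le_mul_of_nonneg_left step2 (Real.exp_pos _).le
        _ = Real.exp (-(-t)*(p*C-u) + p*C*(-t+t^2/2)) := (Real.exp_add _ _).symm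
        _ ≤ Real.exp (-Real.sqrt n) := by
            rw [Real.exp_le_exp, harith]; exact harith2
    calc μ {ω | X ω ≤ p*C - u} = ENNReal.ofReal ((μ {ω | X ω ≤ p*C - u}).toReal) :=
          (ENNReal.ofReal_toReal (measure_ne_top _ _)).symm
      _ ≤ ENNReal.ofReal (Real.exp (-Real.sqrt n)) :=
          ENNReal.ofReal_le_ofReal (hb.trans final)
  calc μ {ω | u < |X ω - p*C|} ≤ μ ({ω | p*C + u ≤ X ω} ∪ {ω | X ω ≤ p*C - u}) :=
        measure_mono hsplit
    _ ≤ μ {ω | p*C + u ≤ X ω} + μ {ω | X ω ≤ p*C - u} := measure_union_le _ _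
    _ ≤ ENNReal.ofReal (Real.exp (-Real.sqrt n)) + ENNReal.ofReal (Real.exp (-Real.sqrt n)) :=
        add_le_add hA hB
    _ = ENNReal.ofReal (2 * Real.exp (-Real.sqrt n)) := by
        rw [← ENNReal.ofReal_add (Real.exp_pos _).le (Real.exp_pos _).le]; ring_nf

lemma sup_diff_le (n k : ℕ) (p q d : ℝ) (G H : Finset (Finset (Fin n)))
    (h : |((G.card : ℝ) / (n.choose k)) * ((H.card : ℝ) / (n.choose k)) * (n.choose k)
          - p * q * (n.choose k)| ≤ d) :
    |disc n k G H - discP n k p q G H| ≤ d := by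
  set a : ℝ := ((G.card : ℝ) / (n.choose k)) * ((H.card : ℝ) / (n.choose k)) * (n.choose k)
  set b : ℝ := p * q * (n.choose k)
  rw [abs_sub_le_iff]
  constructor
  · rw [sub_le_iff_le_add, disc, discP]
    apply Finset.sup'_le
    intro π _
    calc |(overlap n G H π : ℝ) - a| ≤ |(overlap n G H π : ℝ) - b| + |b - a| :=
          abs_sub_le _ _ _
      _ ≤ (Finset.univ.sup' Finset.univ_nonempty fun π : Equiv.Perm (Fin n) =>
            |(overlap n G H π : ℝ) - b|) + d := by
          refine add_le_add (Finset.le_sup' (fun π : Equiv.Perm (Fin n) => |(overlap n G H π : ℝ) - b|) (Finset.mem_univ π)) ?_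
          rw [abs_sub_comm]; exact h
      _ = d + _ := by ring
  · rw [sub_le_iff_le_add, disc, discP]
    apply Finset.sup'_le
    intro π _
    calc |(overlap n G H π : ℝ) - b| ≤ |(overlap n G H π : ℝ) - a| + |a - b| :=
          abs_sub_le _ _ _
      _ ≤ (Finset.univ.sup' Finset.univ_nonempty fun π : Equiv.Perm (Fin n) =>
            |(overlap n G H π : ℝ) - a|) + d := add_le_add (Finset.le_sup' (fun π : Equiv.Perm (Fin n) => |(overlap n G H π : ℝ) - a|) (Finset.mem_univ π)) h
      _ = d + _ := by ring

set_option maxHeartbeats 2000000 in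
/-- w.h.p. the discrepancy and the probabilistic discrepancy
differ by at most `2 * ε` where `ε = 4 * n^(1/4) * sqrt (p*q*C(n,k))`. -/
theorem stmt10 (n k : ℕ) (hk : 2 ≤ k) (hkn : k ≤ n) (p q : ℝ)
    (hp : 0 < p) (hpq : p ≤ q) (hq : q ≤ 1 / 2)
    (hpC : 4 * Real.sqrt n ≤ p * (n.choose k)) :
    ENNReal.ofReal (1 - 4 * Real.exp (-Real.sqrt n)) ≤
      ((hypMeasure n p).prod (hypMeasure n q))
        {ω | |disc n k (edgesOf n k ω.1) (edgesOf n k ω.2) -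
               discP n k p q (edgesOf n k ω.1) (edgesOf n k ω.2)| ≤
             2 * (4 * (n : ℝ) ^ ((1 : ℝ) / 4) * Real.sqrt (p * q * (n.choose k)))} := by
  have hq0 : 0 < q := lt_of_lt_of_le hp hpq
  have hp1 : p ≤ 1 := by linarith
  have hq1 : q ≤ 1 := by linarith
  have hn : 1 ≤ n := le_trans (le_trans one_le_two hk) hkn
  have hsn : 1 ≤ Real.sqrt n := by
    have h : (1:ℝ) ≤ (n:ℝ) := by exact_mod_cast hn
    nlinarith [Real.sq_sqrt (by positivity : (0:ℝ) ≤ (n:ℝ)), Real.sqrt_nonneg (n:ℝ)]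
  set C : ℝ := ((n.choose k : ℕ) : ℝ) with hCdef
  have hpC0 : 0 < p * C := lt_of_lt_of_le (by linarith) hpC
  have hC0 : 0 < C := by
    rcases mul_pos_iff.mp hpC0 with ⟨_, h⟩ | ⟨h, _⟩
    · exact h
    · linarith
  have hqC : 4 * Real.sqrt n ≤ q * C := by
    have : p * C ≤ q * C := by
      apply mul_le_mul_of_nonneg_right hpq
      have := lt_of_lt_of_le (by linarith : (0:ℝ) < 4 * Real.sqrt n) hpC
      rcases mul_pos_iff.mp this with ⟨_, h⟩ | ⟨h, _⟩
      · exact h.le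
      · linarith
    linarith
  have hqC0 : 0 < q * C := lt_of_lt_of_le (by linarith) hqC
  set m : ℝ := (n:ℝ)^((1:ℝ)/4) with hmdef
  have hm0 : 0 ≤ m := Real.rpow_nonneg (Nat.cast_nonneg n) _
  have hm2 : m^2 = Real.sqrt n := rpow_quarter_sq n
  set uP : ℝ := Real.sqrt 8 * m * Real.sqrt (p * C) with hupdef
  set uQ : ℝ := Real.sqrt 8 * m * Real.sqrt (q * C) with huqdef
  have huP0 : 0 ≤ uP := mul_nonneg (mul_nonneg (Real.sqrt_nonneg 8) hm0) (Real.sqrt_nonneg _)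
  have huQ0 : 0 ≤ uQ := mul_nonneg (mul_nonneg (Real.sqrt_nonneg 8) hm0) (Real.sqrt_nonneg _)
  have hpqC0 : 0 < p * q * C := mul_pos (mul_pos hp hq0) hC0
  -- deterministic key claim
  have key : ∀ G H : Finset (Finset (Fin n)),
      |(G.card : ℝ) - p*C| ≤ uP → |(H.card : ℝ) - q*C| ≤ uQ →
      |disc n k G H - discP n k p q G H|
        ≤ 2 * (4 * m * Real.sqrt (p * q * C)) := by
    intro G H hG hH
    apply sup_diff_le
    set X : ℝ := (G.card : ℝ) with hXdef
    set Y : ℝ := (H.card : ℝ) with hYdef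
    have hX0 : 0 ≤ X := Nat.cast_nonneg _
    have hY0 : 0 ≤ Y := Nat.cast_nonneg _
    have hid : X/C * (Y/C) * C - p*q*C = (X - p*C)*(Y/C) + p*(Y - q*C) := by
      field_simp
      ring
    have habs : |X/C*(Y/C)*C - p*q*C| ≤ uP * (Y/C) + p * uQ := by
      rw [hid]
      refine (abs_add_le _ _).trans ?_
      rw [abs_mul, abs_mul, abs_of_nonneg (div_nonneg hY0 hC0.le), abs_of_nonneg hp.le]
      exact add_le_add (mul_le_mul_of_nonneg_right hG (div_nonneg hY0 hC0.le))
        (mul_le_mul_of_nonneg_left hH hp.le)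
    have hYle : Y/C ≤ q + uQ/C := by
      have h := (abs_le.mp hH).1
      have h2 : Y ≤ q*C + uQ := by linarith [(abs_le.mp hH).2]
      calc Y/C ≤ (q*C + uQ)/C := by gcongr
        _ = q + uQ/C := by field_simp
    -- three term bounds
    have sqrt8sq : Real.sqrt 8 * Real.sqrt 8 = 8 := Real.mul_self_sqrt (by norm_num)
    have t1 : uP * q ≤ 2 * m * Real.sqrt (p*q*C) := by
      have e1 : uP * q = m * Real.sqrt (8 * q^2 * (p*C)) := by
        rw [show (8:ℝ) * q^2 * (p*C) = (Real.sqrt 8 * q)^2 * (p*C) by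
            rw [mul_pow, Real.sq_sqrt (by norm_num : (0:ℝ) ≤ 8)],
          Real.sqrt_mul (sq_nonneg _), Real.sqrt_sq (mul_nonneg (Real.sqrt_nonneg 8) hq0.le)]
        rw [hupdef]; ring
      have e2 : Real.sqrt (8*q^2*(p*C)) ≤ Real.sqrt (4*(p*q*C)) := by
        apply Real.sqrt_le_sqrt
        have h := mul_nonneg (mul_nonneg (mul_nonneg
          (by linarith : (0:ℝ) ≤ 1 - 2*q) hq0.le) hp.le) hC0.le
        nlinarith [h]
      have e3 : Real.sqrt (4*(p*q*C)) = 2*Real.sqrt (p*q*C) := by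
        rw [show (4:ℝ)*(p*q*C) = 2^2*(p*q*C) by norm_num,
          Real.sqrt_mul (by norm_num), Real.sqrt_sq (by norm_num)]
      rw [e1]
      calc m * Real.sqrt (8*q^2*(p*C)) ≤ m * (2*Real.sqrt (p*q*C)) := by
            rw [← e3]; exact mul_le_mul_of_nonneg_left e2 hm0
        _ = 2 * m * Real.sqrt (p*q*C) := by ring
    have t3 : p * uQ ≤ 2 * m * Real.sqrt (p*q*C) := by
      have e1 : p * uQ = m * Real.sqrt (8 * p^2 * (q*C)) := by
        rw [show (8:ℝ) * p^2 * (q*C) = (Real.sqrt 8 * p)^2 * (q*C) by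
            rw [mul_pow, Real.sq_sqrt (by norm_num : (0:ℝ) ≤ 8)],
          Real.sqrt_mul (sq_nonneg _), Real.sqrt_sq (mul_nonneg (Real.sqrt_nonneg 8) hp.le)]
        rw [huqdef]; ring
      have e2 : Real.sqrt (8*p^2*(q*C)) ≤ Real.sqrt (4*(p*q*C)) := by
        apply Real.sqrt_le_sqrt
        have h := mul_nonneg (mul_nonneg (mul_nonneg
          (by linarith : (0:ℝ) ≤ 1 - 2*p) hp.le) hq0.le) hC0.le
        nlinarith [h]
      have e3 : Real.sqrt (4*(p*q*C)) = 2*Real.sqrt (p*q*C) := by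
        rw [show (4:ℝ)*(p*q*C) = 2^2*(p*q*C) by norm_num,
          Real.sqrt_mul (by norm_num), Real.sqrt_sq (by norm_num)]
      rw [e1]
      calc m * Real.sqrt (8*p^2*(q*C)) ≤ m * (2*Real.sqrt (p*q*C)) := by
            rw [← e3]; exact mul_le_mul_of_nonneg_left e2 hm0
        _ = 2 * m * Real.sqrt (p*q*C) := by ring
    have t2 : uP * (uQ/C) ≤ 4 * m * Real.sqrt (p*q*C) := by
      have hCm : 2*m ≤ Real.sqrt C := by
        have hpCC : p * C ≤ C := mul_le_of_le_one_left hC0.le hp1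
        have h4 : (2*m)^2 ≤ C := by
          rw [mul_pow, hm2]; norm_num; linarith
        nlinarith [Real.sq_sqrt hC0.le, Real.sqrt_nonneg C, hm0, h4,
          sq_nonneg (Real.sqrt C - 2*m), sq_nonneg (Real.sqrt C + 2*m)]
      have e1 : uP * (uQ/C) = 8 * m^2 * Real.sqrt (p*q) := by
        rw [hupdef, huqdef]
        rw [show Real.sqrt 8 * m * Real.sqrt (p*C) * (Real.sqrt 8 * m * Real.sqrt (q*C) / C)
            = (Real.sqrt 8 * Real.sqrt 8) * (m*m) * (Real.sqrt (p*C) * Real.sqrt (q*C)) / C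
            from by ring]
        rw [sqrt8sq, ← Real.sqrt_mul (le_of_lt hpC0),
          show p*C*(q*C) = (p*q)*C^2 from by ring,
          Real.sqrt_mul (le_of_lt (mul_pos hp hq0)), Real.sqrt_sq hC0.le]
        field_simp
      have e2 : Real.sqrt (p*q*C) = Real.sqrt (p*q) * Real.sqrt C :=
        Real.sqrt_mul (by positivity) _
      rw [e1, e2]
      have h48 : (0:ℝ) ≤ 4*m*Real.sqrt (p*q) :=
        mul_nonneg (mul_nonneg (by norm_num) hm0) (Real.sqrt_nonneg _)
      nlinarith [mul_le_mul_of_nonneg_left hCm h48, Real.sqrt_nonneg (p*q), hm0,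
        mul_nonneg hm0 (Real.sqrt_nonneg (p*q))]
    calc |X/C * (Y/C) * C - p*q*C| ≤ uP * (Y/C) + p * uQ := habs
      _ ≤ uP * (q + uQ/C) + p * uQ := by
          exact add_le_add (mul_le_mul_of_nonneg_left hYle huP0) le_rfl
      _ = uP*q + uP*(uQ/C) + p*uQ := by ring
      _ ≤ 2*m*Real.sqrt (p*q*C) + 4*m*Real.sqrt (p*q*C) + 2*m*Real.sqrt (p*q*C) := by
          linarith
      _ = 8 * m * Real.sqrt (p*q*C) := by ring
      _ = 2 * (4 * m * Real.sqrt (p*q*C)) := by ring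
  -- probabilistic part
  haveI hμP : IsProbabilityMeasure (hypMeasure n p) := hyp_prob n hp.le hp1
  haveI hμQ : IsProbabilityMeasure (hypMeasure n q) := hyp_prob n hq0.le hq1
  set P := (hypMeasure n p).prod (hypMeasure n q) with hPdef
  haveI : IsProbabilityMeasure P := by rw [hPdef]; infer_instance
  set badP : Set (Finset (Fin n) → Bool) :=
    {ω | uP < |((edgesOf n k ω).card : ℝ) - p*C|} with hbadPdef
  set badQ : Set (Finset (Fin n) → Bool) :=
    {ω | uQ < |((edgesOf n k ω).card : ℝ) - q*C|} with hbadQdef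
  have hbP : hypMeasure n p badP ≤ ENNReal.ofReal (2*Real.exp (-Real.sqrt n)) :=
    tail_bound n k hp hp1 hn hpC
  have hbQ : hypMeasure n q badQ ≤ ENNReal.ofReal (2*Real.exp (-Real.sqrt n)) :=
    tail_bound n k hq0 hq1 hn hqC
  set S : Set ((Finset (Fin n) → Bool) × (Finset (Fin n) → Bool)) :=
    {ω | |disc n k (edgesOf n k ω.1) (edgesOf n k ω.2) -
          discP n k p q (edgesOf n k ω.1) (edgesOf n k ω.2)| ≤
          2 * (4 * m * Real.sqrt (p * q * C))} with hSdef
  have hcompl : Sᶜ ⊆ (badP ×ˢ Set.univ) ∪ (Set.univ ×ˢ badQ) := by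
    intro ω hω
    by_contra hcon
    simp only [Set.mem_union, Set.mem_prod, Set.mem_univ, and_true, true_and, not_or] at hcon
    rw [hbadPdef, hbadQdef] at hcon
    simp only [Set.mem_setOf_eq, not_lt] at hcon
    exact hω (key (edgesOf n k ω.1) (edgesOf n k ω.2) hcon.1 hcon.2)
  have hPS : P Sᶜ ≤ ENNReal.ofReal (4*Real.exp (-Real.sqrt n)) := by
    refine (measure_mono hcompl).trans ((measure_union_le _ _).trans ?_)
    rw [hPdef, Measure.prod_prod, Measure.prod_prod, measure_univ, measure_univ, mul_one, one_mul]
    calc hypMeasure n p badP + hypMeasure n q badQ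
        ≤ ENNReal.ofReal (2*Real.exp (-Real.sqrt n)) + ENNReal.ofReal (2*Real.exp (-Real.sqrt n)) :=
          add_le_add hbP hbQ
      _ = ENNReal.ofReal (4*Real.exp (-Real.sqrt n)) := by
          rw [← ENNReal.ofReal_add (by positivity) (by positivity)]; ring_nf
  have hmeas : MeasurableSet S := .of_discrete
  have hPScompl : P S = 1 - P Sᶜ := by
    have h := prob_compl_eq_one_sub (μ := P) hmeas.compl
    rwa [compl_compl] at h
  calc ENNReal.ofReal (1 - 4 * Real.exp (-Real.sqrt n))
      = 1 - ENNReal.ofReal (4 * Real.exp (-Real.sqrt n)) := by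
        rw [ENNReal.ofReal_sub _ (by positivity), ENNReal.ofReal_one]
    _ ≤ 1 - P Sᶜ := tsub_le_tsub_left hPS 1
    _ = P S := hPScompl.symm
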